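/- Let A be a real n×n matrix. On the space ℝ × (ℝⁿ × ℝ) × (ℝⁿ × ℝ) with coordinates (t, (x, w), (u, v)), define the geodesic spray Γ(t,(x,w),(u,v)) = (1, (u, v), (v • (A·u), 0)) and the prolonged dilation field X(t,(x,w),(u,v)) = (0, (x, 0), (u, 0)). Then X commutes with Γ: for every point p, (D Γ)(p)(X(p)) − (D X)(p)(Γ(p)) = 0, where D denotes the Fréchet derivative; hence the dilation field xⁱ∂/∂xⁱ is a Lie symmetry of the geodesic system ẍ = ẇ•(Aẋ), ẅ = 0. -/

import Mathlib

/-- The dilation field `xⁱ ∂/∂xⁱ` (with prolongation `uⁱ ∂/∂uⁱ`) is a Lie symmetry of the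
geodesic system `ẍ = ẇ • (A ẋ)`, `ẅ = 0`: on phase space with coordinates
`(t, (x, w), (u, v))`, the prolonged field `X(p) = (0, (x, 0), (u, 0))` commutes with the
geodesic spray `Γ(p) = (1, (u, v), (v • (A·u), 0))`. -/
theorem dilation_is_lie_symmetry {n : ℕ} (A : Matrix (Fin n) (Fin n) ℝ)
    (Γ X : ℝ × ((Fin n → ℝ) × ℝ) × ((Fin n → ℝ) × ℝ) →
      ℝ × ((Fin n → ℝ) × ℝ) × ((Fin n → ℝ) × ℝ))
    (hΓ : ∀ p : ℝ × ((Fin n → ℝ) × ℝ) × ((Fin n → ℝ) × ℝ),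
      Γ p = (1, (p.2.2.1, p.2.2.2), (p.2.2.2 • A.mulVec p.2.2.1, 0)))
    (hX : ∀ p : ℝ × ((Fin n → ℝ) × ℝ) × ((Fin n → ℝ) × ℝ),
      X p = (0, (p.2.1.1, 0), (p.2.2.1, 0))) :
    ∀ p : ℝ × ((Fin n → ℝ) × ℝ) × ((Fin n → ℝ) × ℝ),
      fderiv ℝ Γ p (X p) - fderiv ℝ X p (Γ p) = 0 := by
  -- coordinate projections as CLMs
  let P2 : (ℝ × ((Fin n → ℝ) × ℝ) × ((Fin n → ℝ) × ℝ)) →L[ℝ] ((Fin n → ℝ) × ℝ) × ((Fin n → ℝ) × ℝ) :=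
    ContinuousLinearMap.snd ℝ ℝ _
  let Cu : (ℝ × ((Fin n → ℝ) × ℝ) × ((Fin n → ℝ) × ℝ)) →L[ℝ] (Fin n → ℝ) :=
    (ContinuousLinearMap.fst ℝ (Fin n → ℝ) ℝ).comp
      ((ContinuousLinearMap.snd ℝ ((Fin n → ℝ) × ℝ) ((Fin n → ℝ) × ℝ)).comp P2)
  let Cv : (ℝ × ((Fin n → ℝ) × ℝ) × ((Fin n → ℝ) × ℝ)) →L[ℝ] ℝ :=
    (ContinuousLinearMap.snd ℝ (Fin n → ℝ) ℝ).comp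
      ((ContinuousLinearMap.snd ℝ ((Fin n → ℝ) × ℝ) ((Fin n → ℝ) × ℝ)).comp P2)
  let Cx : (ℝ × ((Fin n → ℝ) × ℝ) × ((Fin n → ℝ) × ℝ)) →L[ℝ] (Fin n → ℝ) :=
    (ContinuousLinearMap.fst ℝ (Fin n → ℝ) ℝ).comp
      ((ContinuousLinearMap.fst ℝ ((Fin n → ℝ) × ℝ) ((Fin n → ℝ) × ℝ)).comp P2)
  let CA : (Fin n → ℝ) →L[ℝ] (Fin n → ℝ) :=
    LinearMap.toContinuousLinearMap A.mulVecLin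
  have hΓf : Γ = fun p : ℝ × ((Fin n → ℝ) × ℝ) × ((Fin n → ℝ) × ℝ) => ((1 : ℝ), (p.2.2.1, p.2.2.2),
      (p.2.2.2 • A.mulVec p.2.2.1, (0 : ℝ))) := funext hΓ
  have hXf : X = fun p : ℝ × ((Fin n → ℝ) × ℝ) × ((Fin n → ℝ) × ℝ) => ((0 : ℝ), (p.2.1.1, (0 : ℝ)), (p.2.2.1, (0 : ℝ))) := funext hX
  intro p
  -- derivative of X
  let LX : (ℝ × ((Fin n → ℝ) × ℝ) × ((Fin n → ℝ) × ℝ)) →L[ℝ] (ℝ × ((Fin n → ℝ) × ℝ) × ((Fin n → ℝ) × ℝ)) :=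
    (0 : (ℝ × ((Fin n → ℝ) × ℝ) × ((Fin n → ℝ) × ℝ)) →L[ℝ] ℝ).prod ((Cx.prod 0).prod (Cu.prod 0))
  have hXd : HasFDerivAt X LX p := by
    rw [hXf]
    exact LX.hasFDerivAt
  -- derivative of Γ
  have hsmul : HasFDerivAt (fun q : ℝ × ((Fin n → ℝ) × ℝ) × ((Fin n → ℝ) × ℝ) => q.2.2.2 • A.mulVec q.2.2.1)
      (p.2.2.2 • (CA.comp Cu) + Cv.smulRight (A.mulVec p.2.2.1)) p := by
    have h1 : HasFDerivAt (fun q : ℝ × ((Fin n → ℝ) × ℝ) × ((Fin n → ℝ) × ℝ) => q.2.2.2) Cv p := Cv.hasFDerivAt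
    have h2 : HasFDerivAt (fun q : ℝ × ((Fin n → ℝ) × ℝ) × ((Fin n → ℝ) × ℝ) => A.mulVec q.2.2.1) (CA.comp Cu) p :=
      (CA.comp Cu).hasFDerivAt
    exact h1.smul h2
  let LΓ : (ℝ × ((Fin n → ℝ) × ℝ) × ((Fin n → ℝ) × ℝ)) →L[ℝ] (ℝ × ((Fin n → ℝ) × ℝ) × ((Fin n → ℝ) × ℝ)) :=
    (0 : (ℝ × ((Fin n → ℝ) × ℝ) × ((Fin n → ℝ) × ℝ)) →L[ℝ] ℝ).prod ((Cu.prod Cv).prod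
      ((p.2.2.2 • (CA.comp Cu) + Cv.smulRight (A.mulVec p.2.2.1)).prod 0))
  have hΓd : HasFDerivAt Γ LΓ p := by
    rw [hΓf]
    exact (HasFDerivAt.prodMk (hasFDerivAt_const (1 : ℝ) p)
      (HasFDerivAt.prodMk (HasFDerivAt.prodMk Cu.hasFDerivAt Cv.hasFDerivAt)
        (hsmul.prodMk (hasFDerivAt_const (0 : ℝ) p))))
  rw [hΓd.fderiv, hXd.fderiv, hX p, hΓ p]
  simp only [LΓ, LX, Cu, Cv, Cx, CA, P2, ContinuousLinearMap.prod_apply,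
    ContinuousLinearMap.comp_apply, ContinuousLinearMap.coe_fst',
    ContinuousLinearMap.coe_snd', ContinuousLinearMap.add_apply,
    ContinuousLinearMap.smul_apply, ContinuousLinearMap.smulRight_apply,
    ContinuousLinearMap.zero_apply, LinearMap.coe_toContinuousLinearMap',
    Matrix.mulVecLin_apply]
  simp [Prod.ext_iff, zero_smul]
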